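/- Let R be a reduction map on a measurable space (Ω,Σ) with the property that {R δ_ω : ω ∈ Ω} equals the set of rank-one projections. Then the map i : Ω → P(H), i(ω) = R δ_ω, is measurable, and for every probability measure μ on Ω and every bounded self-adjoint operator A, tr((Rμ)A) = ∫_{P(H)} tr(PA) d(μ ∘ i⁻¹)(P); i.e., R μ equals the Misra-Bugajski map applied to the image measure μ ∘ i⁻¹. -/

import Mathlib

open MeasureTheory Topology Filter

/-- The rank-one operator `|φ⟩⟨φ|`. -/
noncomputable def rankOne {H : Type*} [NormedAddCommGroup H] [InnerProductSpace ℂ H]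
    (φ : H) : H →L[ℂ] H := (innerSL ℂ φ).smulRight φ

/-- The set of rank-one orthogonal projections (pure states / projective Hilbert space). -/
noncomputable def projSet (H : Type*) [NormedAddCommGroup H] [InnerProductSpace ℂ H] :
    Set (H →L[ℂ] H) := {T | ∃ φ : H, ‖φ‖ = 1 ∧ T = rankOne φ}

/-- The trace of an operator computed along a Hilbert basis. -/
noncomputable def traceAlong {H ι : Type*} [NormedAddCommGroup H] [InnerProductSpace ℂ H]
    (b : HilbertBasis ι ℂ H) (A : H →L[ℂ] H) : ℂ :=
  ∑' i, inner ℂ (b i) (A (b i))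

/-- `W` is a density operator: positive, trace class, with trace one
(trace computed along the Hilbert basis `b`). -/
noncomputable def IsDensityOp {H ι : Type*} [NormedAddCommGroup H] [InnerProductSpace ℂ H]
    [CompleteSpace H] (b : HilbertBasis ι ℂ H) (W : H →L[ℂ] H) : Prop :=
  W.IsPositive ∧ HasSum (fun i => (inner ℂ (b i) (W (b i)) : ℂ)) 1


section Aux
open scoped InnerProductSpace ComplexConjugate
variable {H ι : Type*} [NormedAddCommGroup H] [InnerProductSpace ℂ H]

lemma rankOne_apply (φ x : H) : rankOne φ x = (inner ℂ φ x : ℂ) • φ := rfl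

lemma rankOne_smul (u : ℂ) (hu : ‖u‖ = 1) (ψ : H) : rankOne (u • ψ) = rankOne ψ := by
  ext x
  simp only [rankOne_apply, inner_smul_left, smul_smul]
  rw [mul_comm ((starRingEnd ℂ) u), mul_assoc, RCLike.conj_mul, hu]
  norm_num

lemma norm_rankOne_sub_le (φ ψ : H) :
    ‖rankOne φ - rankOne ψ‖ ≤ (‖φ‖ + ‖ψ‖) * ‖φ - ψ‖ := by
  refine ContinuousLinearMap.opNorm_le_bound _ (by positivity) fun x => ?_
  have : (rankOne φ - rankOne ψ) x = (inner ℂ (φ - ψ) x : ℂ) • φ + (inner ℂ ψ x : ℂ) • (φ - ψ) := by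
    simp only [ContinuousLinearMap.sub_apply, rankOne_apply, inner_sub_left, sub_smul, smul_sub]
    abel
  rw [this]
  calc ‖(inner ℂ (φ - ψ) x : ℂ) • φ + (inner ℂ ψ x : ℂ) • (φ - ψ)‖
      ≤ ‖(inner ℂ (φ - ψ) x : ℂ) • φ‖ + ‖(inner ℂ ψ x : ℂ) • (φ - ψ)‖ := norm_add_le _ _
    _ ≤ ‖φ - ψ‖ * ‖x‖ * ‖φ‖ + ‖ψ‖ * ‖x‖ * ‖φ - ψ‖ := by
        rw [norm_smul, norm_smul]
        gcongr <;> exact norm_inner_le_norm _ _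
    _ = (‖φ‖ + ‖ψ‖) * ‖φ - ψ‖ * ‖x‖ := by ring

lemma continuous_rankOne : Continuous (rankOne : H → H →L[ℂ] H) := by
  have h : Continuous (Function.uncurry fun (c : H →L[ℂ] ℂ) (y : H) =>
      (ContinuousLinearMap.smulRightL ℂ H H c) y) :=
    (ContinuousLinearMap.smulRightL ℂ H H).continuous₂
  have : Continuous fun φ : H => (innerSL ℂ φ, φ) :=
    ((innerSL ℂ).continuous).prodMk continuous_id
  exact h.comp this

lemma norm_inner_le_one {φ ψ : H} (hφ : ‖φ‖ = 1) (hψ : ‖ψ‖ = 1) :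
    ‖(inner ℂ ψ φ : ℂ)‖ ≤ 1 := by
  simpa [hφ, hψ] using norm_inner_le_norm (𝕜 := ℂ) ψ φ

/-- phase adjustment -/
lemma phase_adjust {φ ψ : H} (hψ : ‖ψ‖ = 1) :
    ∃ ψ' : H, ‖ψ'‖ = 1 ∧ rankOne ψ' = rankOne ψ ∧
      (inner ℂ ψ' φ : ℂ) = (‖(inner ℂ ψ φ : ℂ)‖ : ℂ) := by
  set c : ℂ := inner ℂ ψ φ with hc
  by_cases h : c = 0
  · exact ⟨ψ, hψ, rfl, by rw [← hc, h]; simp⟩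
  · refine ⟨(c / ‖c‖ : ℂ) • ψ, ?_, ?_, ?_⟩
    · rw [norm_smul, hψ, mul_one]
      simp [norm_div, h]
    · apply rankOne_smul
      simp [norm_div, h]
    · rw [inner_smul_left, ← hc, map_div₀, Complex.conj_ofReal]
      have hcn : ((‖c‖ : ℝ) : ℂ) ≠ 0 := by simpa using h
      rw [div_mul_eq_mul_div, RCLike.conj_mul, sq, mul_div_assoc]
      field_simp
      rfl

lemma norm_sub_phase {φ ψ : H} (hφ : ‖φ‖ = 1) (hψ : ‖ψ‖ = 1) {ψ' : H} (hψ' : ‖ψ'‖ = 1)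
    (hin : (inner ℂ ψ' φ : ℂ) = (‖(inner ℂ ψ φ : ℂ)‖ : ℂ)) :
    ‖φ - ψ'‖ ^ 2 = 2 - 2 * ‖(inner ℂ ψ φ : ℂ)‖ := by
  rw [norm_sub_sq (𝕜 := ℂ), hφ, hψ']
  have : (inner ℂ φ ψ' : ℂ) = (‖(inner ℂ ψ φ : ℂ)‖ : ℂ) := by
    rw [← inner_conj_symm, hin, Complex.conj_ofReal]
  rw [this]
  simp
  ring

section complete
variable [CompleteSpace H] (b : HilbertBasis ι ℂ H)

lemma traceAlong_rankOne_mul (φ : H) (A : H →L[ℂ] H) :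
    traceAlong b (rankOne φ * A) = inner ℂ (ContinuousLinearMap.adjoint A φ) φ := by
  unfold traceAlong
  have h : ∀ i : ι, (inner ℂ (b i) ((rankOne φ * A) (b i)) : ℂ) =
      inner ℂ (ContinuousLinearMap.adjoint A φ) (b i) * inner ℂ (b i) φ := by
    intro i
    rw [ContinuousLinearMap.mul_apply, rankOne_apply, inner_smul_right,
      ContinuousLinearMap.adjoint_inner_left]
  rw [tsum_congr h]
  exact b.tsum_inner_mul_inner _ _

lemma adjoint_rankOne (ψ : H) :
    ContinuousLinearMap.adjoint (rankOne ψ) = rankOne ψ := by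
  ext y
  refine ext_inner_left ℂ fun x => ?_
  rw [ContinuousLinearMap.adjoint_inner_right, rankOne_apply, rankOne_apply,
    inner_smul_left, inner_smul_right, inner_conj_symm, mul_comm]

lemma isSelfAdjoint_rankOne (ψ : H) : IsSelfAdjoint (rankOne ψ) :=
  ContinuousLinearMap.isSelfAdjoint_iff'.mpr (adjoint_rankOne ψ)

lemma traceAlong_rankOne_mul_sa (φ : H) {A : H →L[ℂ] H} (hA : IsSelfAdjoint A) :
    traceAlong b (rankOne φ * A) = inner ℂ (A φ) φ := by
  rw [traceAlong_rankOne_mul, ContinuousLinearMap.isSelfAdjoint_iff'.mp hA]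

lemma traceAlong_rankOne_mul_rankOne (φ ψ : H) :
    traceAlong b (rankOne φ * rankOne ψ) = ((‖(inner ℂ ψ φ : ℂ)‖ ^ 2 : ℝ) : ℂ) := by
  rw [traceAlong_rankOne_mul, adjoint_rankOne, rankOne_apply, inner_smul_left,
    RCLike.conj_mul]
  norm_cast

end complete

lemma inner_self_one {φ : H} (hφ : ‖φ‖ = 1) : (inner ℂ φ φ : ℂ) = 1 := by
  rw [inner_self_eq_norm_sq_to_K, hφ]
  norm_num

lemma I1 {φ ψ : H} (hφ : ‖φ‖ = 1) (hψ : ‖ψ‖ = 1) :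
    1 - ‖(inner ℂ ψ φ : ℂ)‖ ^ 2 ≤ ‖rankOne φ - rankOne ψ‖ ^ 2 := by
  set c : ℂ := inner ℂ ψ φ with hc
  have h1 : (rankOne φ - rankOne ψ) φ = φ - c • ψ := by
    simp [rankOne_apply, inner_self_one hφ, ← hc, hφ]
  have h2 : ‖φ - c • ψ‖ ^ 2 = 1 - ‖c‖ ^ 2 := by
    have hconj : (inner ℂ φ ψ : ℂ) = starRingEnd ℂ c := by
      rw [hc, inner_conj_symm]
    rw [norm_sub_sq (𝕜 := ℂ), hφ, inner_smul_right, hconj, RCLike.mul_conj, norm_smul, hψ]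
    simp [← Complex.ofReal_pow]
    ring
  have h3 : ‖(rankOne φ - rankOne ψ) φ‖ ≤ ‖rankOne φ - rankOne ψ‖ := by
    simpa [hφ] using (rankOne φ - rankOne ψ).le_opNorm φ
  have h4 : ‖(rankOne φ - rankOne ψ) φ‖ ^ 2 ≤ ‖rankOne φ - rankOne ψ‖ ^ 2 :=
    pow_le_pow_left₀ (norm_nonneg _) h3 2
  rw [h1, h2] at h4
  exact h4

lemma I2 {φ ψ : H} (hφ : ‖φ‖ = 1) (hψ : ‖ψ‖ = 1) :
    ‖rankOne φ - rankOne ψ‖ ^ 2 ≤ 8 * (1 - ‖(inner ℂ ψ φ : ℂ)‖ ^ 2) := by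
  obtain ⟨ψ', h1, h2, _h3⟩ := phase_adjust (φ := φ) hψ
  have hns : ‖φ - ψ'‖ ^ 2 = 2 - 2 * ‖(inner ℂ ψ φ : ℂ)‖ := norm_sub_phase hφ hψ h1 _h3
  have hle : ‖rankOne φ - rankOne ψ‖ ≤ 2 * ‖φ - ψ'‖ := by
    have := norm_rankOne_sub_le φ ψ'
    rw [hφ, h1, h2] at this
    linarith
  have hc1 : ‖(inner ℂ ψ φ : ℂ)‖ ≤ 1 := norm_inner_le_one hφ hψ
  have hc0 : (0:ℝ) ≤ ‖(inner ℂ ψ φ : ℂ)‖ := norm_nonneg _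
  nlinarith [norm_nonneg (rankOne φ - rankOne ψ), norm_nonneg (φ - ψ')]

section complete2
variable [CompleteSpace H] (b : HilbertBasis ι ℂ H)

lemma trace_lip {A : H →L[ℂ] H} (hA : IsSelfAdjoint A) {φ ψ : H}
    (hφ : ‖φ‖ = 1) (hψ : ‖ψ‖ = 1) :
    ‖traceAlong b (rankOne φ * A) - traceAlong b (rankOne ψ * A)‖ ≤
      (2 * Real.sqrt 2 * ‖A‖) * ‖rankOne φ - rankOne ψ‖ := by
  obtain ⟨ψ', h1, h2, h3⟩ := phase_adjust (φ := φ) hψ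
  have hns : ‖φ - ψ'‖ ^ 2 = 2 - 2 * ‖(inner ℂ ψ φ : ℂ)‖ := norm_sub_phase hφ hψ h1 h3
  have hc1 : ‖(inner ℂ ψ φ : ℂ)‖ ≤ 1 := norm_inner_le_one hφ hψ
  have hI1 : 1 - ‖(inner ℂ ψ φ : ℂ)‖ ^ 2 ≤ ‖rankOne φ - rankOne ψ‖ ^ 2 := I1 hφ hψ
  have hd : ‖φ - ψ'‖ ≤ Real.sqrt 2 * ‖rankOne φ - rankOne ψ‖ := by
    nlinarith [norm_nonneg (φ - ψ'), Real.sqrt_nonneg (2:ℝ), Real.sq_sqrt (by norm_num : (0:ℝ) ≤ 2),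
      norm_nonneg (rankOne φ - rankOne ψ), norm_nonneg (inner ℂ ψ φ : ℂ),
      mul_nonneg (Real.sqrt_nonneg (2:ℝ)) (norm_nonneg (rankOne φ - rankOne ψ))]
  have htr : traceAlong b (rankOne ψ * A) = inner ℂ (A ψ') ψ' := by
    rw [← h2, traceAlong_rankOne_mul_sa b ψ' hA]
  rw [traceAlong_rankOne_mul_sa b φ hA, htr]
  have key : (inner ℂ (A φ) φ : ℂ) - inner ℂ (A ψ') ψ' =
      inner ℂ (A (φ - ψ')) φ + inner ℂ (A ψ') (φ - ψ') := by
    rw [map_sub, inner_sub_left, inner_sub_right]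
    ring
  rw [key]
  have e1 : ‖(inner ℂ (A (φ - ψ')) φ : ℂ)‖ ≤ ‖A‖ * ‖φ - ψ'‖ := by
    calc ‖(inner ℂ (A (φ - ψ')) φ : ℂ)‖ ≤ ‖A (φ - ψ')‖ * ‖φ‖ := norm_inner_le_norm _ _
      _ ≤ ‖A‖ * ‖φ - ψ'‖ * 1 := by gcongr; exacts [A.le_opNorm _, hφ.le]
      _ = ‖A‖ * ‖φ - ψ'‖ := mul_one _
  have e2 : ‖(inner ℂ (A ψ') (φ - ψ') : ℂ)‖ ≤ ‖A‖ * ‖φ - ψ'‖ := by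
    calc ‖(inner ℂ (A ψ') (φ - ψ') : ℂ)‖ ≤ ‖A ψ'‖ * ‖φ - ψ'‖ := norm_inner_le_norm _ _
      _ ≤ ‖A‖ * 1 * ‖φ - ψ'‖ := by gcongr; simpa [h1] using A.le_opNorm ψ'
      _ = ‖A‖ * ‖φ - ψ'‖ := by rw [mul_one]
  calc ‖(inner ℂ (A (φ - ψ')) φ : ℂ) + inner ℂ (A ψ') (φ - ψ')‖
      ≤ ‖A‖ * ‖φ - ψ'‖ + ‖A‖ * ‖φ - ψ'‖ := le_trans (norm_add_le _ _) (add_le_add e1 e2)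
    _ = 2 * ‖A‖ * ‖φ - ψ'‖ := by ring
    _ ≤ 2 * ‖A‖ * (Real.sqrt 2 * ‖rankOne φ - rankOne ψ‖) := by
        gcongr
    _ = (2 * Real.sqrt 2 * ‖A‖) * ‖rankOne φ - rankOne ψ‖ := by ring

end complete2

lemma sandwich [CompleteSpace H] (b : HilbertBasis ι ℂ H) {p q : H →L[ℂ] H}
    (hp : p ∈ projSet H) (hq : q ∈ projSet H) :
    1 - (traceAlong b (p * q)).re ≤ ‖p - q‖ ^ 2 ∧
      ‖p - q‖ ^ 2 ≤ 8 * (1 - (traceAlong b (p * q)).re) := by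
  obtain ⟨φ, hφ, rfl⟩ := hp
  obtain ⟨ψ, hψ, rfl⟩ := hq
  rw [traceAlong_rankOne_mul_rankOne, Complex.ofReal_re]
  exact ⟨I1 hφ hψ, I2 hφ hψ⟩

lemma projSet_separable [SecondCountableTopology H] :
    TopologicalSpace.SeparableSpace ↥(projSet H) := by
  have h1 : TopologicalSpace.IsSeparable (Set.range (rankOne : H → H →L[ℂ] H)) :=
    TopologicalSpace.isSeparable_range continuous_rankOne
  have h2 : projSet H ⊆ Set.range (rankOne : H → H →L[ℂ] H) := by
    rintro p ⟨φ, -, rfl⟩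
    exact ⟨φ, rfl⟩
  exact (h1.mono h2).separableSpace

end Aux

theorem stmt19 {H ι Ω : Type*} [NormedAddCommGroup H] [InnerProductSpace ℂ H] [CompleteSpace H]
    [Nontrivial H] [SecondCountableTopology H] [MeasurableSpace Ω]
    [MeasurableSpace ↥(projSet H)] [BorelSpace ↥(projSet H)] (b : HilbertBasis ι ℂ H)
    (R : SignedMeasure Ω →ₗ[ℝ] (H →L[ℂ] H))
    (R' : (H →L[ℂ] H) → Ω → ℝ)
    (hmeas : ∀ A : H →L[ℂ] H, IsSelfAdjoint A → Measurable (R' A))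
    (hbdd : ∀ A : H →L[ℂ] H, IsSelfAdjoint A → ∃ C : ℝ, ∀ ω, |R' A ω| ≤ C)
    (hdual : ∀ (μ : Measure Ω) [IsProbabilityMeasure μ], ∀ A : H →L[ℂ] H, IsSelfAdjoint A →
        traceAlong b (R μ.toSignedMeasure * A) = ((∫ ω, R' A ω ∂μ : ℝ) : ℂ))
    (hstates : ∀ (μ : Measure Ω) [IsProbabilityMeasure μ], IsDensityOp b (R μ.toSignedMeasure))
    (hsurj : ∀ W : H →L[ℂ] H, IsDensityOp b W →
        ∃ (μ : Measure Ω) (hμ : IsProbabilityMeasure μ),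
          R (letI := hμ; μ.toSignedMeasure) = W)
    (hi : ∀ ω : Ω, R (Measure.dirac ω).toSignedMeasure ∈ projSet H)
    (hionto : ∀ p : ↥(projSet H), ∃ ω : Ω, R (Measure.dirac ω).toSignedMeasure = (p : H →L[ℂ] H)) :
    Measurable (fun ω : Ω => (⟨R (Measure.dirac ω).toSignedMeasure, hi ω⟩ : ↥(projSet H))) ∧
    ∀ (μ : Measure Ω) [IsProbabilityMeasure μ], ∀ A : H →L[ℂ] H, IsSelfAdjoint A →
      traceAlong b (R μ.toSignedMeasure * A) =
        ∫ p, traceAlong b ((p : H →L[ℂ] H) * A)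
          ∂(μ.map (fun ω : Ω => (⟨R (Measure.dirac ω).toSignedMeasure, hi ω⟩ : ↥(projSet H)))) := by
  classical
  set i : Ω → ↥(projSet H) := fun ω => ⟨R (Measure.dirac ω).toSignedMeasure, hi ω⟩ with hidef
  have h_tr : ∀ (ω : Ω) (A : H →L[ℂ] H), IsSelfAdjoint A →
      traceAlong b ((i ω : H →L[ℂ] H) * A) = ((R' A ω : ℝ) : ℂ) := by
    intro ω A hA
    have h := hdual (Measure.dirac ω) A hA
    rwa [integral_dirac' _ _ ((hmeas A hA).stronglyMeasurable)] at h
  have hsa : ∀ q : ↥(projSet H), IsSelfAdjoint (q : H →L[ℂ] H) := by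
    rintro ⟨q, φ, hφ, rfl⟩
    exact isSelfAdjoint_rankOne φ
  have key : ∀ (ω : Ω) (q : ↥(projSet H)),
      R' (q : H →L[ℂ] H) ω = (traceAlong b ((i ω : H →L[ℂ] H) * (q : H →L[ℂ] H))).re := by
    intro ω q
    rw [h_tr ω _ (hsa q), Complex.ofReal_re]
  haveI : TopologicalSpace.SeparableSpace ↥(projSet H) := projSet_separable
  have hmeas_i : Measurable i := by
    apply measurable_of_isOpen
    intro U hU
    obtain ⟨D, hDc, hDd⟩ := TopologicalSpace.exists_countable_dense ↥(projSet H)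
    set V : ↥(projSet H) → ℚ → Set Ω :=
      fun q r => {ω | 1 - R' (q : H →L[ℂ] H) ω < (r : ℝ) ^ 2} with hV
    set T : Set (↥(projSet H) × ℚ) :=
      {x | x.1 ∈ D ∧ 0 < x.2 ∧ Metric.closedBall x.1 (3 * (x.2 : ℝ)) ⊆ U} with hT
    have hTc : T.Countable := by
      refine ((hDc.prod Set.countable_univ).mono ?_)
      rintro x ⟨h1, -, -⟩
      exact ⟨h1, trivial⟩
    have heq : i ⁻¹' U = ⋃ x ∈ T, V x.1 x.2 := by
      ext ω
      simp only [Set.mem_preimage, Set.mem_iUnion]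
      constructor
      · intro hω
        obtain ⟨ε, hε, hball⟩ := Metric.isOpen_iff.mp hU (i ω) hω
        obtain ⟨r, hr0, hr⟩ : ∃ r : ℚ, (0 : ℝ) < (r : ℝ) ∧ (r : ℝ) < ε / 4 := by
          obtain ⟨r, h1, h2⟩ := exists_rat_btwn (show (0 : ℝ) < ε / 4 by linarith)
          exact ⟨r, h1, h2⟩
        obtain ⟨q, hqD, hq⟩ := hDd.exists_dist_lt (i ω) hr0
        refine ⟨(q, r), ⟨hqD, by exact_mod_cast hr0, ?_⟩, ?_⟩
        · intro y hy
          rw [Metric.mem_closedBall] at hy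
          apply hball
          rw [Metric.mem_ball]
          have h4 : dist y (i ω) ≤ dist y q + dist q (i ω) := dist_triangle _ _ _
          rw [dist_comm q (i ω)] at h4
          simp only at hy h4 ⊢
          linarith
        · show 1 - R' (q : H →L[ℂ] H) ω < (r : ℝ) ^ 2
          rw [key ω q]
          have hs := (sandwich b (i ω).2 q.2).1
          have hdist : ‖(i ω : H →L[ℂ] H) - (q : H →L[ℂ] H)‖ = dist (i ω) q := by
            rw [Subtype.dist_eq, dist_eq_norm]
          rw [hdist] at hs
          nlinarith [dist_nonneg (x := i ω) (y := q)]
      · rintro ⟨x, ⟨hxD, hx0, hxU⟩, hωV⟩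
        apply hxU
        rw [Metric.mem_closedBall]
        have hs := (sandwich b (i ω).2 x.1.2).2
        have hωV2 : 1 - R' (x.1 : H →L[ℂ] H) ω < (x.2 : ℝ) ^ 2 := hωV
        rw [key ω x.1] at hωV2
        have hdist : dist (i ω) x.1 = ‖(i ω : H →L[ℂ] H) - (x.1 : H →L[ℂ] H)‖ := by
          rw [Subtype.dist_eq, dist_eq_norm]
        rw [hdist]
        have hx0r : (0 : ℝ) < (x.2 : ℝ) := by exact_mod_cast hx0
        nlinarith [norm_nonneg ((i ω : H →L[ℂ] H) - (x.1 : H →L[ℂ] H))]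
    rw [heq]
    refine MeasurableSet.biUnion hTc fun x hx => ?_
    exact measurableSet_lt (measurable_const.sub (hmeas _ (hsa x.1))) measurable_const
  refine ⟨hmeas_i, ?_⟩
  intro μ hμ A hA
  have hg : StronglyMeasurable (fun p : ↥(projSet H) => traceAlong b ((p : H →L[ℂ] H) * A)) := by
    have hlip : LipschitzWith ⟨2 * Real.sqrt 2 * ‖A‖, by positivity⟩
        (fun p : ↥(projSet H) => traceAlong b ((p : H →L[ℂ] H) * A)) := by
      apply LipschitzWith.of_dist_le_mul
      rintro ⟨p, φ, hφ, rfl⟩ ⟨q, ψ, hψ, rfl⟩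
      rw [Subtype.dist_eq, dist_eq_norm, dist_eq_norm]
      exact trace_lip b hA hφ hψ
    exact hlip.continuous.stronglyMeasurable
  calc traceAlong b (R μ.toSignedMeasure * A) = ((∫ ω, R' A ω ∂μ : ℝ) : ℂ) := hdual μ A hA
    _ = ∫ ω, ((R' A ω : ℝ) : ℂ) ∂μ := integral_ofReal.symm
    _ = ∫ ω, traceAlong b ((i ω : H →L[ℂ] H) * A) ∂μ := by
        refine integral_congr_ae (Filter.Eventually.of_forall fun ω => ?_)
        exact (h_tr ω A hA).symm
    _ = ∫ p, traceAlong b ((p : H →L[ℂ] H) * A) ∂(μ.map i) :=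
        (integral_map_of_stronglyMeasurable hmeas_i hg).symm
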